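/- The contracted semigroup algebra ℚ₀T¹ is isomorphic as a ℚ-algebra to T₂(ℚ), the algebra of upper triangular 2×2 matrices over ℚ. -/

import Mathlib

/-- The four-element monoid `T¹ = {1, e, f, θ}` with `θ` an absorbing zero,
`e² = e`, `f² = f`, `ef = f`, `fe = e`. -/
inductive T1 : Type
  | one : T1
  | e : T1
  | f : T1
  | theta : T1
deriving DecidableEq

instance : Fintype T1 where
  elems := {.one, .e, .f, .theta}
  complete := by intro x; cases x <;> simp

instance : Monoid T1 where
  one := .one
  mul x y :=
    match x, y with
    | .one, y => y
    | x, .one => x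
    | .theta, _ => .theta
    | _, .theta => .theta
    | _, .e => .e
    | _, .f => .f
  mul_assoc := by decide
  one_mul := by decide
  mul_one := by decide

/-- The contracted semigroup algebra `ℚ₀T¹`: the quotient of the monoid algebra
`ℚ[T¹]` by the two-sided ideal spanned by `θ`. -/
noncomputable abbrev Q0T1 : Type :=
  (TwoSidedIdeal.span {MonoidAlgebra.single T1.theta (1 : ℚ)}).ringCon.Quotient

/-- The `ℚ`-algebra structure on the quotient of a `ℚ`-algebra by a two-sided ideal. -/
noncomputable instance quotAlgebra {A : Type*} [Ring A] [Algebra ℚ A]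
    (I : TwoSidedIdeal A) : Algebra ℚ I.ringCon.Quotient :=
  RingHom.toAlgebra'
    ((I.ringCon.mk' : A →+* I.ringCon.Quotient).comp (algebraMap ℚ A))
    (fun q x => Quotient.inductionOn' x fun a => by
      show (I.ringCon.mk' (algebraMap ℚ A q)) * I.ringCon.mk' a
          = I.ringCon.mk' a * I.ringCon.mk' (algebraMap ℚ A q)
      rw [← map_mul, ← map_mul, Algebra.commutes])

/-- The `ℚ`-algebra of upper triangular `2 × 2` matrices over `ℚ`. -/
def T2Q : Subalgebra ℚ (Matrix (Fin 2) (Fin 2) ℚ) where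
  carrier := {M | M 1 0 = 0}
  mul_mem' := by
    intro a b ha hb
    simp only [Set.mem_setOf_eq] at *
    simp [Matrix.mul_apply, Fin.sum_univ_two, ha, hb]
  add_mem' := by
    intro a b ha hb
    simp only [Set.mem_setOf_eq] at *
    simp [ha, hb]
  algebraMap_mem' := by
    intro q
    simp [Matrix.algebraMap_eq_diagonal, Matrix.diagonal]

namespace T1iso

lemma mem_T2Q {M : Matrix (Fin 2) (Fin 2) ℚ} : M ∈ T2Q ↔ M 1 0 = 0 := Iff.rfl

def mE : T2Q := ⟨!![1,0;0,0], by simp [mem_T2Q]⟩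
def mF : T2Q := ⟨!![1,1;0,0], by simp [mem_T2Q]⟩

lemma hEE : mE * mE = mE := by
  apply Subtype.ext
  show (!![1,0;0,0] : Matrix (Fin 2) (Fin 2) ℚ) * !![1,0;0,0] = !![1,0;0,0]
  ext i j
  fin_cases i <;> fin_cases j <;> norm_num [Matrix.mul_apply, Fin.sum_univ_two]

lemma hEF : mE * mF = mF := by
  apply Subtype.ext
  show (!![1,0;0,0] : Matrix (Fin 2) (Fin 2) ℚ) * !![1,1;0,0] = !![1,1;0,0]
  ext i j
  fin_cases i <;> fin_cases j <;> norm_num [Matrix.mul_apply, Fin.sum_univ_two]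

lemma hFE : mF * mE = mE := by
  apply Subtype.ext
  show (!![1,1;0,0] : Matrix (Fin 2) (Fin 2) ℚ) * !![1,0;0,0] = !![1,0;0,0]
  ext i j
  fin_cases i <;> fin_cases j <;> norm_num [Matrix.mul_apply, Fin.sum_univ_two]

lemma hFF : mF * mF = mF := by
  apply Subtype.ext
  show (!![1,1;0,0] : Matrix (Fin 2) (Fin 2) ℚ) * !![1,1;0,0] = !![1,1;0,0]
  ext i j
  fin_cases i <;> fin_cases j <;> norm_num [Matrix.mul_apply, Fin.sum_univ_two]

def Fm : T1 →* T2Q where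
  toFun t := match t with
    | .one => 1
    | .e => mE
    | .f => mF
    | .theta => 0
  map_one' := rfl
  map_mul' x y := by
    cases x <;> cases y
    · exact (one_mul _).symm
    · exact (one_mul _).symm
    · exact (one_mul _).symm
    · exact (one_mul _).symm
    · exact (mul_one _).symm
    · exact hEE.symm
    · exact hEF.symm
    · exact (mul_zero _).symm
    · exact (mul_one _).symm
    · exact hFE.symm
    · exact hFF.symm
    · exact (mul_zero _).symm
    · exact (mul_one _).symm
    · exact (zero_mul _).symm
    · exact (zero_mul _).symm
    · exact (zero_mul _).symm

@[simp] lemma Fm_one : Fm T1.one = 1 := rfl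
@[simp] lemma Fm_e : Fm T1.e = mE := rfl
@[simp] lemma Fm_f : Fm T1.f = mF := rfl
@[simp] lemma Fm_theta : Fm T1.theta = 0 := rfl

noncomputable def φ : MonoidAlgebra ℚ T1 →ₐ[ℚ] T2Q :=
  MonoidAlgebra.lift ℚ T2Q T1 Fm

lemma φ_single (t : T1) (q : ℚ) : φ (MonoidAlgebra.single t q) = q • Fm t :=
  MonoidAlgebra.lift_single _ _ _

noncomputable abbrev sθ : MonoidAlgebra ℚ T1 := MonoidAlgebra.single T1.theta (1 : ℚ)
noncomputable abbrev J : TwoSidedIdeal (MonoidAlgebra ℚ T1) := TwoSidedIdeal.span {sθ}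

lemma span_le_ker : ∀ x ∈ J, φ x = 0 := by
  intro x hx
  have : x ∈ TwoSidedIdeal.ker φ.toRingHom := by
    refine TwoSidedIdeal.mem_span_iff.1 hx _ ?_
    intro y hy
    simp only [Set.mem_singleton_iff] at hy
    subst hy
    simp only [SetLike.mem_coe, TwoSidedIdeal.mem_ker]
    show φ sθ = 0
    rw [φ_single, Fm_theta, smul_zero]
  exact TwoSidedIdeal.mem_ker _ |>.1 this

lemma decomp (x : MonoidAlgebra ℚ T1) :
    x = MonoidAlgebra.single T1.one (x.coeff T1.one) + MonoidAlgebra.single T1.e (x.coeff T1.e)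
      + MonoidAlgebra.single T1.f (x.coeff T1.f) + MonoidAlgebra.single T1.theta (x.coeff T1.theta) := by
  have : ∀ (y : T1 →₀ ℚ), y = Finsupp.single T1.one (y T1.one) + Finsupp.single T1.e (y T1.e)
      + Finsupp.single T1.f (y T1.f) + Finsupp.single T1.theta (y T1.theta) := by
    intro y
    ext t
    cases t <;> simp [Finsupp.single_apply]
  exact MonoidAlgebra.coeff_injective (this x.coeff)

lemma φ_apply (x : MonoidAlgebra ℚ T1) :
    φ x = x.coeff T1.one • (1 : T2Q) + x.coeff T1.e • mE + x.coeff T1.f • mF := by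
  conv_lhs => rw [decomp x]
  simp only [map_add, φ_single, Fm_one, Fm_e, Fm_f, Fm_theta, smul_zero, add_zero]

lemma φ_val (x : MonoidAlgebra ℚ T1) :
    (φ x : Matrix (Fin 2) (Fin 2) ℚ)
      = x.coeff T1.one • (1 : Matrix (Fin 2) (Fin 2) ℚ) + x.coeff T1.e • !![1,0;0,0]
        + x.coeff T1.f • !![1,1;0,0] := by
  rw [φ_apply]; rfl

lemma φ_ker {x : MonoidAlgebra ℚ T1} (h : φ x = 0) : x ∈ J := by
  have hm : x.coeff T1.one • (1 : Matrix (Fin 2) (Fin 2) ℚ) + x.coeff T1.e • !![1,0;0,0]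
      + x.coeff T1.f • !![1,1;0,0] = 0 := by
    rw [← φ_val, h]; rfl
  have h11 : x.coeff T1.one = 0 := by
    have := congrFun (congrFun hm 1) 1
    simpa [Matrix.one_apply] using this
  have h01 : x.coeff T1.f = 0 := by
    have := congrFun (congrFun hm 0) 1
    simpa [Matrix.one_apply, h11] using this
  have h00 : x.coeff T1.e = 0 := by
    have := congrFun (congrFun hm 0) 0
    simpa [Matrix.one_apply, h11, h01] using this
  have hx : x = MonoidAlgebra.single T1.one (x.coeff T1.theta) * sθ := by
    conv_lhs => rw [decomp x]
    rw [h11, h01, h00, MonoidAlgebra.single_mul_single]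
    simp
    rfl
  rw [hx]
  exact TwoSidedIdeal.mul_mem_left _ _ _ (TwoSidedIdeal.subset_span (by simp))

lemma φ_surj : Function.Surjective φ := by
  rintro ⟨M, hM⟩
  refine ⟨MonoidAlgebra.single T1.one (M 1 1)
    + MonoidAlgebra.single T1.e (M 0 0 - M 0 1 - M 1 1)
    + MonoidAlgebra.single T1.f (M 0 1), ?_⟩
  apply Subtype.ext
  have : (φ (MonoidAlgebra.single T1.one (M 1 1))
      + φ (MonoidAlgebra.single T1.e (M 0 0 - M 0 1 - M 1 1))
      + φ (MonoidAlgebra.single T1.f (M 0 1)) : T2Q).1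
      = M 1 1 • (1 : Matrix (Fin 2) (Fin 2) ℚ) + (M 0 0 - M 0 1 - M 1 1) • !![1,0;0,0]
        + M 0 1 • !![1,1;0,0] := by
    simp only [φ_single, Fm_one, Fm_e, Fm_f]
    rfl
  rw [map_add, map_add]
  rw [show ((φ (MonoidAlgebra.single T1.one (M 1 1))
      + φ (MonoidAlgebra.single T1.e (M 0 0 - M 0 1 - M 1 1))
      + φ (MonoidAlgebra.single T1.f (M 0 1)) : T2Q) : Matrix (Fin 2) (Fin 2) ℚ) = _ from this]
  have h10 : M 1 0 = 0 := hM
  ext i j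
  fin_cases i <;> fin_cases j <;> simp [Matrix.one_apply, h10]

noncomputable def Φ : Q0T1 →ₐ[ℚ] T2Q where
  toFun := fun x => Quotient.liftOn' x (fun a => φ a) (fun a b h => by
    have hab : a - b ∈ J := (TwoSidedIdeal.rel_iff _ _ _).1 h
    have := span_le_ker _ hab
    rw [map_sub, sub_eq_zero] at this
    exact this)
  map_one' := by
    show φ 1 = 1
    rw [map_one]
  map_mul' x y := Quotient.inductionOn₂' x y fun a b => by
    show φ (a * b) = φ a * φ b
    rw [map_mul]
  map_add' x y := Quotient.inductionOn₂' x y fun a b => by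
    show φ (a + b) = φ a + φ b
    rw [map_add]
  map_zero' := by
    show φ 0 = 0
    rw [map_zero]
  commutes' q := by
    show φ (algebraMap ℚ (MonoidAlgebra ℚ T1) q) = algebraMap ℚ T2Q q
    rw [AlgHom.commutes]

lemma Φ_mk (a : MonoidAlgebra ℚ T1) : Φ (Quotient.mk'' a) = φ a := rfl

lemma Φ_bij : Function.Bijective Φ := by
  constructor
  · intro x y
    refine Quotient.inductionOn₂' x y fun a b h => ?_
    rw [Φ_mk, Φ_mk] at h
    refine Quotient.sound' ?_
    show J.ringCon a b
    refine (TwoSidedIdeal.rel_iff _ _ _).2 (φ_ker ?_)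
    rw [map_sub, h, sub_self]
  · intro m
    obtain ⟨a, ha⟩ := φ_surj m
    exact ⟨Quotient.mk'' a, (Φ_mk a).trans ha⟩

end T1iso

theorem contracted_algebra_T1_iso_upper_triangular :
    Nonempty (Q0T1 ≃ₐ[ℚ] T2Q) :=
  ⟨AlgEquiv.ofBijective T1iso.Φ T1iso.Φ_bij⟩
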